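/- Let a_n, b_n be sequences of nonzero reals and let y_n be a sequence with y_n ≠ 0 for all n satisfying y_{n+1} = a_n y_n + b_n y_{n−1} for n ≥ 1. Let A_n, B_n be defined by A_0=1, A_1=a_0, B_0=0, B_1=1 and the same recurrence. Then for all n ≥ 1, A_n = y_n (1/y_0 + (a_0 y_0 − y_1) ∑_{k=0}^{n−1} (∏_{i=1}^{k}(−b_i)) / (y_k y_{k+1})) and B_n = y_0 y_n ∑_{k=0}^{n−1} (∏_{i=1}^{k}(−b_i)) / (y_k y_{k+1}). -/

import Mathlib

theorem stmt19 (a b y A B : ℕ → ℝ)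
    (ha : ∀ n, a n ≠ 0) (hb : ∀ n, b n ≠ 0) (hy : ∀ n, y n ≠ 0)
    (hyrec : ∀ n : ℕ, 1 ≤ n → y (n + 1) = a n * y n + b n * y (n - 1))
    (hA0 : A 0 = 1) (hA1 : A 1 = a 0)
    (hB0 : B 0 = 0) (hB1 : B 1 = 1)
    (hA : ∀ n : ℕ, 1 ≤ n → A (n + 1) = a n * A n + b n * A (n - 1))
    (hB : ∀ n : ℕ, 1 ≤ n → B (n + 1) = a n * B n + b n * B (n - 1)) :
    ∀ n : ℕ, 1 ≤ n →
      A n = y n * (1 / y 0 + (a 0 * y 0 - y 1) *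
          ∑ k ∈ Finset.range n, (∏ i ∈ Finset.Icc 1 k, (-b i)) / (y k * y (k + 1))) ∧
      B n = y 0 * y n *
          ∑ k ∈ Finset.range n, (∏ i ∈ Finset.Icc 1 k, (-b i)) / (y k * y (k + 1)) := by
  set P : ℕ → ℝ := fun k => ∏ i ∈ Finset.Icc 1 k, (-b i) with hP
  set S : ℕ → ℝ := fun n => ∑ k ∈ Finset.range n, P k / (y k * y (k + 1)) with hS
  set c : ℝ := a 0 * y 0 - y 1 with hc
  have hSsucc : ∀ n : ℕ, S (n + 1) = S n + P n / (y n * y (n + 1)) := by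
    intro n
    simp [hS, Finset.sum_range_succ]
  have hPsucc : ∀ m : ℕ, P (m + 1) = P m * (-b (m + 1)) := by
    intro m
    simp [hP, Finset.prod_Icc_succ_top (Nat.le_add_left 1 m)]
  -- key identity
  have key : ∀ m : ℕ,
      a (m + 1) * y (m + 1) * S (m + 1) + b (m + 1) * y m * S m
        = y (m + 2) * S (m + 2) := by
    intro m
    have h2 : S (m + 2) = S (m + 1) + P (m + 1) / (y (m + 1) * y (m + 2)) := hSsucc (m + 1)
    have h1 : S (m + 1) = S m + P m / (y m * y (m + 1)) := hSsucc m
    have hyr : y (m + 2) = a (m + 1) * y (m + 1) + b (m + 1) * y m := by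
      have := hyrec (m + 1) (Nat.le_add_left 1 m)
      simpa using this
    have e : y (m + 2) * S (m + 2) = y (m + 2) * S (m + 1) + P (m + 1) / y (m + 1) := by
      rw [h2]
      field_simp [hy (m + 1), hy (m + 2)]
    rw [e, hyr, h1, hPsucc]
    field_simp [hy m, hy (m + 1)]
    ring
  have main : ∀ n : ℕ, A n = y n * (1 / y 0 + c * S n) ∧ B n = y 0 * y n * S n := by
    intro n
    induction n using Nat.twoStepInduction with
    | zero =>
      constructor
      · simp [hA0, hS]
        field_simp [hy 0]
      · simp [hB0, hS]
    | one =>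
      have hS1 : S 1 = 1 / (y 0 * y 1) := by
        simp [hS, hP]
      constructor
      · rw [hA1, hS1, hc]
        field_simp [hy 0, hy 1]
        ring
      · rw [hB1, hS1]
        field_simp [hy 0, hy 1]
    | more n ih ih1 =>
      obtain ⟨hAn, hBn⟩ := ih
      obtain ⟨hAn1, hBn1⟩ := ih1
      have hArec : A (n + 2) = a (n + 1) * A (n + 1) + b (n + 1) * A n := by
        have := hA (n + 1) (Nat.le_add_left 1 n)
        simpa using this
      have hBrec : B (n + 2) = a (n + 1) * B (n + 1) + b (n + 1) * B n := by
        have := hB (n + 1) (Nat.le_add_left 1 n)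
        simpa using this
      have hyr : y (n + 2) = a (n + 1) * y (n + 1) + b (n + 1) * y n := by
        have := hyrec (n + 1) (Nat.le_add_left 1 n)
        simpa using this
      constructor
      · rw [hArec, hAn, hAn1]
        have := key n
        linear_combination c * this - (1 / y 0) * hyr
      · rw [hBrec, hBn, hBn1]
        linear_combination y 0 * key n
  intro n _
  exact main n
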